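/- arXiv:math/0406274 — 2 statements merged into one kernel-verified Lean document; each statement's English description precedes it below -/
import Mathlib

section
/- Let D be a Lie algebra over a field of characteristic zero equipped with a nondegenerate invariant symmetric bilinear form ⟨⟨·,·⟩⟩, and let D = K ⊕ K* be a decomposition into two isotropic Lie subalgebras (a Manin triple). Suppose K = H ⊕ M is a direct sum decomposition of vector spaces such that H is a Lie subalgebra of K with [H,M] ⊆ M, and write K* = H* ⊕ M* where H* = M^⊥ ∩ K* and M* = H^⊥ ∩ K* (orthogonal complements with respect to the pairing between K and K*). If H* is a Lie subalgebra of K* and M* is a Lie ideal of K*, then [H*, H] ⊆ H ⊕ H*; that is, H + H* is a Lie subalgebra of D. -/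
/-- In a Manin triple `D = K ⊕ K*` with `K = H ⊕ M`, `H` a subalgebra,
`[H,M] ⊆ M`, `H* = M^⊥ ∩ K*` a subalgebra and `M* = H^⊥ ∩ K*` an ideal of `K*`,
one has `[H*, H] ⊆ H ⊕ H*`, i.e. `H + H*` is a Lie subalgebra of `D`. -/
theorem manin_H_Hstar_subalgebra
    {k : Type*} [Field k] [CharZero k]
    {D : Type*} [LieRing D] [LieAlgebra k D]
    (B : D →ₗ[k] D →ₗ[k] k)
    (hBsymm : ∀ x y, B x y = B y x)
    (hBinv : ∀ x y z, B ⁅x, y⁆ z = B x ⁅y, z⁆)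
    (hBnd : ∀ x, (∀ y, B x y = 0) → x = 0)
    (K Ks : Submodule k D)
    (hKsub : ∀ x ∈ K, ∀ y ∈ K, ⁅x, y⁆ ∈ K)
    (hKssub : ∀ x ∈ Ks, ∀ y ∈ Ks, ⁅x, y⁆ ∈ Ks)
    (hKiso : ∀ x ∈ K, ∀ y ∈ K, B x y = 0)
    (hKsiso : ∀ x ∈ Ks, ∀ y ∈ Ks, B x y = 0)
    (hdir : IsCompl K Ks)
    (H M : Submodule k D) (hHK : H ≤ K) (hMK : M ≤ K)
    (hHMinf : H ⊓ M = ⊥) (hHMsup : H ⊔ M = K)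
    (hHsub : ∀ x ∈ H, ∀ y ∈ H, ⁅x, y⁆ ∈ H)
    (hHMbr : ∀ x ∈ H, ∀ y ∈ M, ⁅x, y⁆ ∈ M)
    (Hs Ms : Submodule k D)
    (hHs : ∀ x, x ∈ Hs ↔ x ∈ Ks ∧ ∀ m ∈ M, B x m = 0)
    (hMs : ∀ x, x ∈ Ms ↔ x ∈ Ks ∧ ∀ h ∈ H, B x h = 0)
    (hKsinf : Hs ⊓ Ms = ⊥) (hKssup : Hs ⊔ Ms = Ks)
    (hHssub : ∀ x ∈ Hs, ∀ y ∈ Hs, ⁅x, y⁆ ∈ Hs)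
    (hMsideal : ∀ x ∈ Ks, ∀ y ∈ Ms, ⁅x, y⁆ ∈ Ms) :
    ∀ x ∈ Hs, ∀ y ∈ H, ⁅x, y⁆ ∈ H ⊔ Hs := by
  intro ξ hξ h hh
  -- key nondegeneracy lemma: vanishing on H, M, Hs, Ms implies zero
  have key : ∀ z : D, (∀ y ∈ H, B z y = 0) → (∀ y ∈ M, B z y = 0) →
      (∀ y ∈ Hs, B z y = 0) → (∀ y ∈ Ms, B z y = 0) → z = 0 := by
    intro z h1 h2 h3 h4
    apply hBnd
    intro y
    have hy : y ∈ K ⊔ Ks := by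
      rw [codisjoint_iff.mp hdir.codisjoint]; trivial
    obtain ⟨yk, hyk, ys, hys, rfl⟩ := Submodule.mem_sup.mp hy
    have hyk' : yk ∈ H ⊔ M := by rw [hHMsup]; exact hyk
    obtain ⟨yh, hyh, ym, hym, rfl⟩ := Submodule.mem_sup.mp hyk'
    have hys' : ys ∈ Hs ⊔ Ms := by rw [hKssup]; exact hys
    obtain ⟨yhs, hyhs, yms, hyms, rfl⟩ := Submodule.mem_sup.mp hys'
    simp [map_add, h1 yh hyh, h2 ym hym, h3 yhs hyhs, h4 yms hyms]
  have hξKs : ξ ∈ Ks := ((hHs ξ).mp hξ).1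
  have hhK : h ∈ K := hHK hh
  -- decompose ⁅ξ, h⁆
  have hbr : ⁅ξ, h⁆ ∈ K ⊔ Ks := by
    rw [codisjoint_iff.mp hdir.codisjoint]; trivial
  obtain ⟨c, hc, κ, hκ, hsum⟩ := Submodule.mem_sup.mp hbr
  have hc' : c ∈ H ⊔ M := by rw [hHMsup]; exact hc
  obtain ⟨a, ha, b, hb, rfl⟩ := Submodule.mem_sup.mp hc'
  have hκ' : κ ∈ Hs ⊔ Ms := by rw [hKssup]; exact hκ
  obtain ⟨α, hα, β, hβ, rfl⟩ := Submodule.mem_sup.mp hκ'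
  have hbK : b ∈ K := hMK hb
  have haK : a ∈ K := hHK ha
  have hαKs : α ∈ Ks := (hKssup ▸ Submodule.mem_sup_left hα : α ∈ Ks)
  have hβKs : β ∈ Ks := (hKssup ▸ Submodule.mem_sup_right hβ : β ∈ Ks)
  -- B ⁅ξ,h⁆ η = 0 for η ∈ Ms
  have pairMs : ∀ η ∈ Ms, B ⁅ξ, h⁆ η = 0 := by
    intro η hη
    rw [show (⁅ξ, h⁆ : D) = -⁅h, ξ⁆ from (lie_skew ξ h).symm, map_neg,
      LinearMap.neg_apply, hBinv h ξ η]
    have hmem : ⁅ξ, η⁆ ∈ Ms := hMsideal ξ hξKs η hη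
    have := ((hMs ⁅ξ, η⁆).mp hmem).2 h hh
    rw [hBsymm, this, neg_zero]
  -- B ⁅ξ,h⁆ m = 0 for m ∈ M
  have pairM : ∀ m ∈ M, B ⁅ξ, h⁆ m = 0 := by
    intro m hm
    rw [hBinv ξ h m]
    exact ((hHs ξ).mp hξ).2 ⁅h, m⁆ (hHMbr h hh m hm)
  -- b = 0
  have hb0 : b = 0 := by
    apply key
    · intro y hy; exact hKiso b hbK y (hHK hy)
    · intro y hy; exact hKiso b hbK y (hMK hy)
    · intro y hy; rw [hBsymm]; exact ((hHs y).mp hy).2 b hb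
    · intro y hy
      have e : B ⁅ξ, h⁆ y = B a y + B b y + B α y + B β y := by
        rw [← hsum]; simp [map_add]; ring
      have h1 : B a y = 0 := by rw [hBsymm]; exact ((hMs y).mp hy).2 a ha
      have h2 : B α y = 0 :=
        hKsiso α hαKs y ((hKssup ▸ Submodule.mem_sup_right hy : y ∈ Ks))
      have h3 : B β y = 0 :=
        hKsiso β hβKs y ((hKssup ▸ Submodule.mem_sup_right hy : y ∈ Ks))
      have := pairMs y hy
      rw [e, h1, h2, h3] at this
      simpa using this
  -- β = 0
  have hβ0 : β = 0 := by
    apply key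
    · intro y hy; exact ((hMs β).mp hβ).2 y hy
    · intro y hy
      have e : B ⁅ξ, h⁆ y = B a y + B b y + B α y + B β y := by
        rw [← hsum]; simp [map_add]; ring
      have h1 : B a y = 0 := hKiso a haK y (hMK hy)
      have h2 : B b y = 0 := hKiso b hbK y (hMK hy)
      have h3 : B α y = 0 := ((hHs α).mp hα).2 y hy
      have := pairM y hy
      rw [e, h1, h2, h3] at this
      simpa using this
    · intro y hy
      exact hKsiso β hβKs y ((hKssup ▸ Submodule.mem_sup_left hy : y ∈ Ks))
    · intro y hy
      exact hKsiso β hβKs y ((hKssup ▸ Submodule.mem_sup_right hy : y ∈ Ks))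
  have : ⁅ξ, h⁆ = a + α := by rw [← hsum, hb0, hβ0]; abel
  rw [this]
  exact Submodule.add_mem_sup ha hα
end

section
/- With the setup of a Manin triple D = K ⊕ K*, decompositions K = H ⊕ M and K* = H* ⊕ M* with H* = M^⊥ ∩ K*, M* = H^⊥ ∩ K*, [H,M] ⊆ M, H* a subalgebra and M* an ideal of K*: the subspace H ⊕ H* of D, equipped with the restricted Lie bracket of D and the restricted bilinear form, is itself a Manin triple, i.e., H and H* are isotropic Lie subalgebras of H ⊕ H* and the restricted form is nondegenerate on H ⊕ H*. -/
/-- Under the Manin-triple setup, `H ⊕ H*` with the restricted bracket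
and form is itself a Manin triple: `H` and `H*` are isotropic Lie subalgebras of
`H ⊕ H*`, the latter is closed under the bracket, and the restricted bilinear form is
nondegenerate on `H ⊕ H*`. -/
theorem manin_H_Hstar_is_manin_triple
    {k : Type*} [Field k] [CharZero k]
    {D : Type*} [LieRing D] [LieAlgebra k D]
    (B : D →ₗ[k] D →ₗ[k] k)
    (hBsymm : ∀ x y, B x y = B y x)
    (hBinv : ∀ x y z, B ⁅x, y⁆ z = B x ⁅y, z⁆)
    (hBnd : ∀ x, (∀ y, B x y = 0) → x = 0)
    (K Ks : Submodule k D)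
    (hKsub : ∀ x ∈ K, ∀ y ∈ K, ⁅x, y⁆ ∈ K)
    (hKssub : ∀ x ∈ Ks, ∀ y ∈ Ks, ⁅x, y⁆ ∈ Ks)
    (hKiso : ∀ x ∈ K, ∀ y ∈ K, B x y = 0)
    (hKsiso : ∀ x ∈ Ks, ∀ y ∈ Ks, B x y = 0)
    (hdir : IsCompl K Ks)
    (H M : Submodule k D) (hHK : H ≤ K) (hMK : M ≤ K)
    (hHMinf : H ⊓ M = ⊥) (hHMsup : H ⊔ M = K)
    (hHsub : ∀ x ∈ H, ∀ y ∈ H, ⁅x, y⁆ ∈ H)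
    (hHMbr : ∀ x ∈ H, ∀ y ∈ M, ⁅x, y⁆ ∈ M)
    (Hs Ms : Submodule k D)
    (hHs : ∀ x, x ∈ Hs ↔ x ∈ Ks ∧ ∀ m ∈ M, B x m = 0)
    (hMs : ∀ x, x ∈ Ms ↔ x ∈ Ks ∧ ∀ h ∈ H, B x h = 0)
    (hKsinf : Hs ⊓ Ms = ⊥) (hKssup : Hs ⊔ Ms = Ks)
    (hHssub : ∀ x ∈ Hs, ∀ y ∈ Hs, ⁅x, y⁆ ∈ Hs)
    (hMsideal : ∀ x ∈ Ks, ∀ y ∈ Ms, ⁅x, y⁆ ∈ Ms) :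
    (∀ x ∈ H, ∀ y ∈ H, B x y = 0 ∧ ⁅x, y⁆ ∈ H) ∧
    (∀ x ∈ Hs, ∀ y ∈ Hs, B x y = 0 ∧ ⁅x, y⁆ ∈ Hs) ∧
    (∀ x ∈ H ⊔ Hs, ∀ y ∈ H ⊔ Hs, ⁅x, y⁆ ∈ H ⊔ Hs) ∧
    (∀ x ∈ H ⊔ Hs, (∀ y ∈ H ⊔ Hs, B x y = 0) → x = 0) := by

  have hHsKs : ∀ x ∈ Hs, x ∈ Ks := fun x hx => ((hHs x).mp hx).1
  have hMsKs : ∀ x ∈ Ms, x ∈ Ks := fun x hx => ((hMs x).mp hx).1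
  have hHsM : ∀ x ∈ Hs, ∀ m ∈ M, B x m = 0 := fun x hx => ((hHs x).mp hx).2
  have hMsH : ∀ x ∈ Ms, ∀ h ∈ H, B x h = 0 := fun x hx => ((hMs x).mp hx).2
  -- decomposition of any element of D
  have decomp : ∀ y : D, ∃ yh ∈ H, ∃ ym ∈ M, ∃ yhs ∈ Hs, ∃ yms ∈ Ms,
      y = yh + ym + yhs + yms := by
    intro y
    have hy : y ∈ K ⊔ Ks := by rw [hdir.sup_eq_top]; trivial
    obtain ⟨z, hz, w, hw, rfl⟩ := Submodule.mem_sup.mp hy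
    rw [← hHMsup] at hz
    obtain ⟨a, ha, m, hm, rfl⟩ := Submodule.mem_sup.mp hz
    rw [← hKssup] at hw
    obtain ⟨b, hb, n, hn, rfl⟩ := Submodule.mem_sup.mp hw
    exact ⟨a, ha, m, hm, b, hb, n, hn, by abel⟩
  -- key: [H, Hs] ⊆ H ⊔ Hs
  have key : ∀ h ∈ H, ∀ ξ ∈ Hs, ⁅h, ξ⁆ ∈ H ⊔ Hs := by
    intro h hh ξ hξ
    obtain ⟨a, ha, m, hm, b, hb, n, hn, heq⟩ := decomp ⁅h, ξ⁆
    -- the M-component vanishes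
    have hBMs : ∀ s ∈ Ms, B ⁅h, ξ⁆ s = 0 := by
      intro s hs
      rw [hBinv]
      have : ⁅ξ, s⁆ ∈ Ms := hMsideal ξ (hHsKs ξ hξ) s hs
      rw [hBsymm]; exact hMsH _ this h hh
    have hm0 : m = 0 := by
      apply hBnd
      intro y
      obtain ⟨yh, hyh, ym, hym, yhs, hyhs, yms, hyms, rfl⟩ := decomp y
      have h1 : B m yh = 0 := hKiso m (hMK hm) yh (hHK hyh)
      have h2 : B m ym = 0 := hKiso m (hMK hm) ym (hMK hym)
      have h3 : B m yhs = 0 := by rw [hBsymm]; exact hHsM yhs hyhs m hm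
      have h4 : B m yms = 0 := by
        have e : B ⁅h, ξ⁆ yms = B a yms + B m yms + B b yms + B n yms := by
          rw [heq]; simp [map_add]
        have e1 : B ⁅h, ξ⁆ yms = 0 := hBMs yms hyms
        have e2 : B a yms = 0 := by rw [hBsymm]; exact hMsH yms hyms a ha
        have e3 : B b yms = 0 := hKsiso b (hHsKs b hb) yms (hMsKs yms hyms)
        have e4 : B n yms = 0 := hKsiso n (hMsKs n hn) yms (hMsKs yms hyms)
        rw [e1, e2, e3, e4] at e; simpa using e.symm
      simp [map_add, h1, h2, h3, h4]
    -- the Ms-component vanishes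
    have hBM : ∀ s ∈ M, B ⁅h, ξ⁆ s = 0 := by
      intro s hs
      have : B ⁅ξ, h⁆ s = B ξ ⁅h, s⁆ := hBinv ξ h s
      have hξs : B ξ ⁅h, s⁆ = 0 := hHsM ξ hξ _ (hHMbr h hh s hs)
      have : B ⁅ξ, h⁆ s = 0 := by rw [this, hξs]
      have hlie : (⁅h, ξ⁆ : D) = -⁅ξ, h⁆ := (lie_skew h ξ).symm
      rw [hlie, map_neg, LinearMap.neg_apply, this, neg_zero]
    have hn0 : n = 0 := by
      apply hBnd
      intro y
      obtain ⟨yh, hyh, ym, hym, yhs, hyhs, yms, hyms, rfl⟩ := decomp y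
      have h1 : B n yh = 0 := hMsH n hn yh hyh
      have h3 : B n yhs = 0 := hKsiso n (hMsKs n hn) yhs (hHsKs yhs hyhs)
      have h4 : B n yms = 0 := hKsiso n (hMsKs n hn) yms (hMsKs yms hyms)
      have h2 : B n ym = 0 := by
        have e : B ⁅h, ξ⁆ ym = B a ym + B m ym + B b ym + B n ym := by
          rw [heq]; simp [map_add]
        have e1 : B ⁅h, ξ⁆ ym = 0 := hBM ym hym
        have e2 : B a ym = 0 := hKiso a (hHK ha) ym (hMK hym)
        have e3 : B m ym = 0 := hKiso m (hMK hm) ym (hMK hym)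
        have e4 : B b ym = 0 := hHsM b hb ym hym
        rw [e1, e2, e3, e4] at e; simpa using e.symm
      simp [map_add, h1, h2, h3, h4]
    rw [heq, hm0, hn0]
    have : a + 0 + b + 0 = a + b := by abel
    rw [this]
    exact Submodule.add_mem_sup ha hb
  refine ⟨fun x hx y hy => ⟨hKiso x (hHK hx) y (hHK hy), hHsub x hx y hy⟩,
    fun x hx y hy => ⟨hKsiso x (hHsKs x hx) y (hHsKs y hy), hHssub x hx y hy⟩, ?_, ?_⟩
  · intro x hx y hy
    obtain ⟨a, ha, b, hb, rfl⟩ := Submodule.mem_sup.mp hx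
    obtain ⟨c, hc, d, hd, rfl⟩ := Submodule.mem_sup.mp hy
    have e : ⁅a + b, c + d⁆ = ⁅a, c⁆ + ⁅a, d⁆ + ⁅b, c⁆ + ⁅b, d⁆ := by
      simp [lie_add, add_lie]; abel
    rw [e]
    have h1 : ⁅a, c⁆ ∈ H ⊔ Hs := Submodule.mem_sup_left (hHsub a ha c hc)
    have h2 : ⁅a, d⁆ ∈ H ⊔ Hs := key a ha d hd
    have h3 : ⁅b, c⁆ ∈ H ⊔ Hs := by
      have : (⁅b, c⁆ : D) = -⁅c, b⁆ := (lie_skew b c).symm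
      rw [this]
      exact Submodule.neg_mem _ (key c hc b hb)
    have h4 : ⁅b, d⁆ ∈ H ⊔ Hs := Submodule.mem_sup_right (hHssub b hb d hd)
    exact Submodule.add_mem _ (Submodule.add_mem _ (Submodule.add_mem _ h1 h2) h3) h4
  · intro x hx hxperp
    obtain ⟨a, ha, b, hb, rfl⟩ := Submodule.mem_sup.mp hx
    apply hBnd
    intro y
    obtain ⟨yh, hyh, ym, hym, yhs, hyhs, yms, hyms, rfl⟩ := decomp y
    have h1 : B (a + b) yh = 0 := hxperp yh (Submodule.mem_sup_left hyh)
    have h3 : B (a + b) yhs = 0 := hxperp yhs (Submodule.mem_sup_right hyhs)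
    have h2 : B (a + b) ym = 0 := by
      have e1 : B a ym = 0 := hKiso a (hHK ha) ym (hMK hym)
      have e2 : B b ym = 0 := hHsM b hb ym hym
      simp [map_add, LinearMap.add_apply, e1, e2]
    have h4 : B (a + b) yms = 0 := by
      have e1 : B a yms = 0 := by rw [hBsymm]; exact hMsH yms hyms a ha
      have e2 : B b yms = 0 := hKsiso b (hHsKs b hb) yms (hMsKs yms hyms)
      simp [map_add, LinearMap.add_apply, e1, e2]
    simp only [map_add, LinearMap.add_apply] at h1 h2 h3 h4 ⊢
    linear_combination h1 + h2 + h3 + h4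
end
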